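/- Hölder-1/2 modulus of continuity of the diffusion: for every integer n ≥ 2, let U_n = { y ∈ D : h_{I,l} ≤ 1 − 1/n for all l = 1,…,L }. Then there exists a constant C ≥ 0 such that for all y, y' ∈ U_n, ‖σ(y) − σ(y')‖² ≤ C ‖y − y'‖, where σ(y) ∈ ℝ^{3K+3L} collects all diffusion coefficients (σ^{SS}_k(y), σ^{SI}_k(y), σ^{II}_k(y))_{k=1,…,K} and (σ^{SS,h}_l(y), σ^{SI,h}_l(y), σ^{II,h}_l(y))_{l=1,…,L}. Equivalently, with κ(u) = C√u, the Yamada–Watanabe modulus condition ‖σ(y) − σ(y')‖² ≤ κ(‖y − y'‖²) holds on U_n. -/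

import Mathlib

private lemma sq_sqrt_sub_le' (a b : ℝ) : (Real.sqrt a - Real.sqrt b) ^ 2 ≤ |a - b| := by
  wlog h : b ≤ a generalizing a b
  · rw [abs_sub_comm, ← neg_sub, neg_sq]; exact this b a (le_of_not_ge h)
  rw [abs_of_nonneg (by linarith)]
  rcases le_or_gt a 0 with ha | ha
  · rw [Real.sqrt_eq_zero' .. |>.2 ha, Real.sqrt_eq_zero' .. |>.2 (h.trans ha)]
    simpa using by linarith
  rcases le_or_gt b 0 with hb | hb
  · rw [Real.sqrt_eq_zero' .. |>.2 hb]
    have := Real.sq_sqrt ha.le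
    nlinarith
  · have h1 := Real.sq_sqrt ha.le
    have h2 := Real.sq_sqrt hb.le
    have h3 : Real.sqrt b ≤ Real.sqrt a := Real.sqrt_le_sqrt h
    have h4 := Real.sqrt_nonneg b
    nlinarith

set_option maxHeartbeats 1000000 in
/-- Hölder-1/2 modulus of continuity of the diffusion map on
`U_n = { y ∈ D : h_{I,l} ≤ 1 − 1/n for all l }`: there exists `C ≥ 0` such
that `‖σ(y) − σ(y')‖² ≤ C ‖y − y'‖` for all `y, y' ∈ U_n`; equivalently, with
`κ(u) = C √u`, the Yamada–Watanabe modulus condition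
`‖σ(y) − σ(y')‖² ≤ κ(‖y − y'‖²)` holds on `U_n`. The map `σ` collects all
`3K + 3L` diffusion coefficients. -/
theorem diffusion_holder_half
    (K L : ℕ) (hK : 1 ≤ K) (hL : 1 ≤ L)
    (α : ℝ) (hα : 0 < α)
    (β : Fin K → ℝ) (hβ : ∀ k, 0 < β k)
    (ν : Fin L → ℝ) (hν : ∀ l, 0 < ν l)
    (N : Fin K → ℝ) (hN : ∀ k, 0 < N k)
    (NH : Fin K → ℝ) (hNH : ∀ k, 0 < NH k)
    (H : Fin L → ℝ) (hH : ∀ l, 0 < H l)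
    (z : Fin K → Fin L → ℝ) (hz : ∀ k l, z k l = 0 ∨ z k l = 1)
    (cp ch : Fin K → Fin K → ℝ)
    (hcp : ∀ k j, 0 ≤ cp k j) (hch : ∀ k j, 0 ≤ ch k j)
    (n : ℕ) (hn : 2 ≤ n)
    -- the set Uₙ inside the physical domain D
    (Un : Set ((Fin K → ℝ) × (Fin K → ℝ) × (Fin L → ℝ) × (Fin L → ℝ)))
    (hUn : Un = { y | (∀ k, 0 ≤ y.1 k) ∧ (∀ k, 0 ≤ y.2.1 k) ∧
      (∀ l, 0 ≤ y.2.2.1 l) ∧ (∀ l, 0 ≤ y.2.2.2 l) ∧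
      (∀ k, y.1 k + y.2.1 k ≤ 1) ∧ (∀ l, y.2.2.1 l + y.2.2.2 l ≤ 1) ∧
      (∀ l, y.2.2.2 l ≤ 1 - 1 / (n : ℝ)) })
    -- the coupled contact rate as a function of the state
    (c : ((Fin K → ℝ) × (Fin K → ℝ) × (Fin L → ℝ) × (Fin L → ℝ)) →
      Fin K → Fin K → ℝ)
    (hc : ∀ y k j, c y k j =
      cp k j + (∑ l : Fin L, z k l * y.2.2.2 l * H l) *
        (∑ l : Fin L, z k l * (1 - y.2.2.2 l)⁻¹) * ch k j / NH k)
    -- the diffusion map, collecting all 3K + 3L coefficients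
    (σ : ((Fin K → ℝ) × (Fin K → ℝ) × (Fin L → ℝ) × (Fin L → ℝ)) →
      ((Fin K → ℝ) × (Fin K → ℝ) × (Fin K → ℝ)) ×
      ((Fin L → ℝ) × (Fin L → ℝ) × (Fin L → ℝ)))
    (hσ : ∀ y, σ y =
      ((fun k => Real.sqrt (α / N k * y.1 k * ∑ j : Fin K, c y k j * y.2.1 j),
        fun k => -Real.sqrt (α / N k * y.1 k * ∑ j : Fin K, c y k j * y.2.1 j),
        fun k => Real.sqrt (β k * y.2.1 k / N k)),
       (fun l => Real.sqrt (α / H l * (y.2.2.1 l / H l) *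
          ∑ k : Fin K, z k l * N k * y.1 k * ∑ j : Fin K, cp k j * y.2.1 j),
        fun l => -Real.sqrt (α / H l * (y.2.2.1 l / H l) *
          ∑ k : Fin K, z k l * N k * y.1 k * ∑ j : Fin K, cp k j * y.2.1 j),
        fun l => Real.sqrt (ν l * y.2.2.2 l / H l)))) :
    ∃ C : ℝ, 0 ≤ C ∧
      (∀ y ∈ Un, ∀ y' ∈ Un, ‖σ y - σ y'‖ ^ 2 ≤ C * ‖y - y'‖) ∧
      (∀ y ∈ Un, ∀ y' ∈ Un,
        ‖σ y - σ y'‖ ^ 2 ≤ C * Real.sqrt (‖y - y'‖ ^ 2)) := by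
  classical
  have hn0 : (0 : ℝ) < 1 / (n : ℝ) := by
    have : (0 : ℝ) < (n : ℝ) := by exact_mod_cast Nat.lt_of_lt_of_le (by norm_num) hn
    positivity
  set V : Set ((Fin K → ℝ) × (Fin K → ℝ) × (Fin L → ℝ) × (Fin L → ℝ)) :=
    {y | ∀ l, y.2.2.2 l < 1} with hV
  set f : ((Fin K → ℝ) × (Fin K → ℝ) × (Fin L → ℝ) × (Fin L → ℝ)) →
      ((Fin K → ℝ) × (Fin K → ℝ) × (Fin L → ℝ) × (Fin L → ℝ)) := fun y =>
    (fun k => α / N k * y.1 k * ∑ j : Fin K, (cp k j +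
        (∑ l : Fin L, z k l * y.2.2.2 l * H l) *
        (∑ l : Fin L, z k l * (1 - y.2.2.2 l)⁻¹) * ch k j / NH k) * y.2.1 j,
     fun k => β k * y.2.1 k / N k,
     fun l => α / H l * (y.2.2.1 l / H l) *
        ∑ k : Fin K, z k l * N k * y.1 k * ∑ j : Fin K, cp k j * y.2.1 j,
     fun l => ν l * y.2.2.2 l / H l) with hfdef
  -- U_n is contained in V
  have hUV : Un ⊆ V := by
    intro y hy
    rw [hUn] at hy
    intro l
    have h7 := hy.2.2.2.2.2.2 l
    show y.2.2.2 l < 1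
    linarith
  -- V is open
  have hVopen : IsOpen V := by
    rw [hV, Set.setOf_forall]
    exact isOpen_iInter_of_finite fun l =>
      isOpen_lt (by fun_prop : Continuous fun y :
        ((Fin K → ℝ) × (Fin K → ℝ) × (Fin L → ℝ) × (Fin L → ℝ)) => y.2.2.2 l) continuous_const
  -- U_n is closed
  have hUclosed : IsClosed Un := by
    rw [hUn]
    simp only [Set.setOf_and, Set.setOf_forall]
    refine IsClosed.inter (isClosed_iInter fun k =>
        isClosed_le continuous_const (by fun_prop)) ?_
    refine IsClosed.inter (isClosed_iInter fun k =>
        isClosed_le continuous_const (by fun_prop)) ?_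
    refine IsClosed.inter (isClosed_iInter fun l =>
        isClosed_le continuous_const (by fun_prop)) ?_
    refine IsClosed.inter (isClosed_iInter fun l =>
        isClosed_le continuous_const (by fun_prop)) ?_
    refine IsClosed.inter (isClosed_iInter fun k =>
        isClosed_le (by fun_prop) continuous_const) ?_
    refine IsClosed.inter (isClosed_iInter fun l =>
        isClosed_le (by fun_prop) continuous_const) ?_
    exact isClosed_iInter fun l => isClosed_le (by fun_prop) continuous_const
  -- U_n is bounded
  have hUbdd : Bornology.IsBounded Un := by
    rw [isBounded_iff_forall_norm_le]
    refine ⟨1, fun y hy => ?_⟩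
    rw [hUn] at hy
    obtain ⟨h1, h2, h3, h4, h5, h6, h7⟩ := hy
    simp only [Prod.norm_def]
    refine max_le ?_ (max_le ?_ (max_le ?_ ?_)) <;>
      · rw [pi_norm_le_iff_of_nonneg zero_le_one]
        intro i
        rw [Real.norm_eq_abs, abs_le]
        constructor <;> [skip; skip] <;>
          first
          | linarith [h1 i, h2 i, h5 i]
          | linarith [h3 i, h4 i, h6 i, h7 i]
  have hUc : IsCompact Un := Metric.isCompact_of_isClosed_isBounded hUclosed hUbdd
  -- U_n is convex
  have hconv : Convex ℝ Un := by
    intro y hy y' hy' a b ha hb hab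
    rw [hUn] at hy hy' ⊢
    obtain ⟨p1, p2, p3, p4, p5, p6, p7⟩ := hy
    obtain ⟨q1, q2, q3, q4, q5, q6, q7⟩ := hy'
    simp only [Set.mem_setOf_eq, Prod.fst_add, Prod.snd_add, Prod.smul_fst, Prod.smul_snd,
      Pi.add_apply, Pi.smul_apply, smul_eq_mul]
    refine ⟨fun k => ?_, fun k => ?_, fun l => ?_, fun l => ?_, fun k => ?_, fun l => ?_,
      fun l => ?_⟩
    · nlinarith [p1 k, q1 k]
    · nlinarith [p2 k, q2 k]
    · nlinarith [p3 l, q3 l]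
    · nlinarith [p4 l, q4 l]
    · nlinarith [mul_le_mul_of_nonneg_left (p5 k) ha, mul_le_mul_of_nonneg_left (q5 k) hb]
    · nlinarith [mul_le_mul_of_nonneg_left (p6 l) ha, mul_le_mul_of_nonneg_left (q6 l) hb]
    · nlinarith [mul_le_mul_of_nonneg_left (p7 l) ha, mul_le_mul_of_nonneg_left (q7 l) hb]
  -- f is C¹ on V
  have hfC : ContDiffOn ℝ 1 f V := by
    rw [hfdef, hV]
    have e1 : ∀ k : Fin K, ContDiff ℝ 1
      (fun y : (Fin K → ℝ) × (Fin K → ℝ) × (Fin L → ℝ) × (Fin L → ℝ) => y.1 k) := by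
      intro k; fun_prop
    have e2 : ∀ k : Fin K, ContDiff ℝ 1
      (fun y : (Fin K → ℝ) × (Fin K → ℝ) × (Fin L → ℝ) × (Fin L → ℝ) => y.2.1 k) := by
      intro k; fun_prop
    have e3 : ∀ l : Fin L, ContDiff ℝ 1
      (fun y : (Fin K → ℝ) × (Fin K → ℝ) × (Fin L → ℝ) × (Fin L → ℝ) => y.2.2.1 l) := by
      intro l; fun_prop
    have e4 : ∀ l : Fin L, ContDiff ℝ 1
      (fun y : (Fin K → ℝ) × (Fin K → ℝ) × (Fin L → ℝ) × (Fin L → ℝ) => y.2.2.2 l) := by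
      intro l; fun_prop
    have hinv : ∀ l : Fin L, ContDiffOn ℝ 1
        (fun y : (Fin K → ℝ) × (Fin K → ℝ) × (Fin L → ℝ) × (Fin L → ℝ) => (1 - y.2.2.2 l)⁻¹)
        {y | ∀ l, y.2.2.2 l < 1} := by
      intro l
      refine ContDiffOn.inv ?_ ?_
      · exact (by fun_prop : ContDiff ℝ 1
          (fun y : (Fin K → ℝ) × (Fin K → ℝ) × (Fin L → ℝ) × (Fin L → ℝ) =>
            1 - y.2.2.2 l)).contDiffOn
      · intro x hx h; simp only [Set.mem_setOf_eq] at hx; linarith [hx l]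
    have hS : ∀ k : Fin K, ContDiff ℝ 1
        (fun y : (Fin K → ℝ) × (Fin K → ℝ) × (Fin L → ℝ) × (Fin L → ℝ) =>
          ∑ j : Fin K, cp k j * y.2.1 j) :=
      fun k => ContDiff.sum fun j _ => contDiff_const.mul (e2 j)
    have hA : ∀ k : Fin K, ContDiff ℝ 1
        (fun y : (Fin K → ℝ) × (Fin K → ℝ) × (Fin L → ℝ) × (Fin L → ℝ) =>
          ∑ l : Fin L, z k l * y.2.2.2 l * H l) :=
      fun k => ContDiff.sum fun l _ => ((contDiff_const.mul (e4 l)).mul contDiff_const)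
    have hB : ∀ k : Fin K, ContDiffOn ℝ 1
        (fun y : (Fin K → ℝ) × (Fin K → ℝ) × (Fin L → ℝ) × (Fin L → ℝ) =>
          ∑ l : Fin L, z k l * (1 - y.2.2.2 l)⁻¹) {y | ∀ l, y.2.2.2 l < 1} :=
      fun k => ContDiffOn.sum fun l _ => contDiffOn_const.mul (hinv l)
    refine ContDiffOn.prodMk ?_ (ContDiffOn.prodMk ?_ (ContDiffOn.prodMk ?_ ?_))
    · rw [contDiffOn_pi]
      intro k
      refine ContDiffOn.mul ((contDiff_const.mul (e1 k)).contDiffOn) ?_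
      refine ContDiffOn.sum fun j _ => ContDiffOn.mul
        (ContDiffOn.add contDiffOn_const ?_) (e2 j).contDiffOn
      exact ((((hA k).contDiffOn.mul (hB k)).mul contDiffOn_const).div_const _)
    · rw [contDiffOn_pi]; intro k
      exact ((contDiff_const.mul (e2 k)).div_const (N k)).contDiffOn
    · rw [contDiffOn_pi]; intro l
      refine ContDiff.contDiffOn ?_
      refine ContDiff.mul (contDiff_const.mul ((e3 l).div_const (H l))) ?_
      exact ContDiff.sum fun k _ => ((contDiff_const.mul (e1 k)).mul (hS k))
    · rw [contDiffOn_pi]; intro l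
      exact ((contDiff_const.mul (e4 l)).div_const (H l)).contDiffOn
  -- Lipschitz bound via mean value inequality
  have hdiff : ∀ x ∈ V, DifferentiableAt ℝ f x := fun x hx =>
    (hfC.contDiffAt (hVopen.mem_nhds hx)).differentiableAt one_ne_zero
  have hcont : ContinuousOn (fderiv ℝ f) V :=
    hfC.continuousOn_fderiv_of_isOpen hVopen le_rfl
  obtain ⟨C0, hC0⟩ := hUc.exists_bound_of_continuousOn (hcont.mono hUV)
  set C1 : ℝ := max C0 0 with hC1
  have hC1nn : 0 ≤ C1 := le_max_right _ _
  have hbound : ∀ x ∈ Un, ‖fderiv ℝ f x‖ ≤ C1 := fun x hx =>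
    (hC0 x hx).trans (le_max_left _ _)
  have hLip : ∀ y ∈ Un, ∀ y' ∈ Un, ‖f y - f y'‖ ≤ C1 * ‖y - y'‖ := fun y hy y' hy' =>
    hconv.norm_image_sub_le_of_norm_fderiv_le (fun x hx => hdiff x (hUV hx)) hbound hy' hy
  -- componentwise bounds
  have hcomp : ∀ y ∈ Un, ∀ y' ∈ Un,
      (∀ k, |(f y).1 k - (f y').1 k| ≤ C1 * ‖y - y'‖) ∧
      (∀ k, |(f y).2.1 k - (f y').2.1 k| ≤ C1 * ‖y - y'‖) ∧
      (∀ l, |(f y).2.2.1 l - (f y').2.2.1 l| ≤ C1 * ‖y - y'‖) ∧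
      (∀ l, |(f y).2.2.2 l - (f y').2.2.2 l| ≤ C1 * ‖y - y'‖) := by
    intro y hy y' hy'
    have h := hLip y hy y' hy'
    refine ⟨fun k => ?_, fun k => ?_, fun l => ?_, fun l => ?_⟩
    · calc |(f y).1 k - (f y').1 k| = ‖((f y - f y').1) k‖ := by
            simp [Real.norm_eq_abs]
        _ ≤ ‖(f y - f y').1‖ := norm_le_pi_norm _ k
        _ ≤ ‖f y - f y'‖ := norm_fst_le _
        _ ≤ _ := h
    · calc |(f y).2.1 k - (f y').2.1 k| = ‖((f y - f y').2.1) k‖ := by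
            simp [Real.norm_eq_abs]
        _ ≤ ‖(f y - f y').2.1‖ := norm_le_pi_norm _ k
        _ ≤ ‖(f y - f y').2‖ := norm_fst_le _
        _ ≤ ‖f y - f y'‖ := norm_snd_le _
        _ ≤ _ := h
    · calc |(f y).2.2.1 l - (f y').2.2.1 l| = ‖((f y - f y').2.2.1) l‖ := by
            simp [Real.norm_eq_abs]
        _ ≤ ‖(f y - f y').2.2.1‖ := norm_le_pi_norm _ l
        _ ≤ ‖(f y - f y').2.2‖ := norm_fst_le _
        _ ≤ ‖(f y - f y').2‖ := norm_snd_le _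
        _ ≤ ‖f y - f y'‖ := norm_snd_le _
        _ ≤ _ := h
    · calc |(f y).2.2.2 l - (f y').2.2.2 l| = ‖((f y - f y').2.2.2) l‖ := by
            simp [Real.norm_eq_abs]
        _ ≤ ‖(f y - f y').2.2.2‖ := norm_le_pi_norm _ l
        _ ≤ ‖(f y - f y').2.2‖ := norm_snd_le _
        _ ≤ ‖(f y - f y').2‖ := norm_snd_le _
        _ ≤ ‖f y - f y'‖ := norm_snd_le _
        _ ≤ _ := h
  -- main estimate
  have main : ∀ y ∈ Un, ∀ y' ∈ Un, ‖σ y - σ y'‖ ^ 2 ≤ C1 * ‖y - y'‖ := by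
    intro y hy y' hy'
    obtain ⟨hc1, hc2, hc3, hc4⟩ := hcomp y hy y' hy'
    simp only [hfdef] at hc1 hc2 hc3 hc4
    have hnn : 0 ≤ C1 * ‖y - y'‖ := mul_nonneg hC1nn (norm_nonneg _)
    have key : ‖σ y - σ y'‖ ≤ Real.sqrt (C1 * ‖y - y'‖) := by
      rw [hσ y, hσ y']
      simp only [hc, Prod.mk_sub_mk, Prod.norm_def]
      refine max_le (max_le ?_ (max_le ?_ ?_)) (max_le ?_ (max_le ?_ ?_))
      · rw [pi_norm_le_iff_of_nonneg (Real.sqrt_nonneg _)]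
        intro i
        rw [Pi.sub_apply, Real.norm_eq_abs]
        exact Real.abs_le_sqrt (le_trans (sq_sqrt_sub_le' _ _) (hc1 i))
      · rw [pi_norm_le_iff_of_nonneg (Real.sqrt_nonneg _)]
        intro i
        rw [Pi.sub_apply, Real.norm_eq_abs, neg_sub_neg]
        refine Real.abs_le_sqrt (le_trans (sq_sqrt_sub_le' _ _) ?_)
        rw [abs_sub_comm]
        exact hc1 i
      · rw [pi_norm_le_iff_of_nonneg (Real.sqrt_nonneg _)]
        intro i
        rw [Pi.sub_apply, Real.norm_eq_abs]
        exact Real.abs_le_sqrt (le_trans (sq_sqrt_sub_le' _ _) (hc2 i))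
      · rw [pi_norm_le_iff_of_nonneg (Real.sqrt_nonneg _)]
        intro i
        rw [Pi.sub_apply, Real.norm_eq_abs]
        exact Real.abs_le_sqrt (le_trans (sq_sqrt_sub_le' _ _) (hc3 i))
      · rw [pi_norm_le_iff_of_nonneg (Real.sqrt_nonneg _)]
        intro i
        rw [Pi.sub_apply, Real.norm_eq_abs, neg_sub_neg]
        refine Real.abs_le_sqrt (le_trans (sq_sqrt_sub_le' _ _) ?_)
        rw [abs_sub_comm]
        exact hc3 i
      · rw [pi_norm_le_iff_of_nonneg (Real.sqrt_nonneg _)]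
        intro i
        rw [Pi.sub_apply, Real.norm_eq_abs]
        exact Real.abs_le_sqrt (le_trans (sq_sqrt_sub_le' _ _) (hc4 i))
    calc ‖σ y - σ y'‖ ^ 2 ≤ (Real.sqrt (C1 * ‖y - y'‖)) ^ 2 :=
          pow_le_pow_left₀ (norm_nonneg _) key 2
      _ = C1 * ‖y - y'‖ := Real.sq_sqrt hnn
  refine ⟨C1, hC1nn, main, fun y hy y' hy' => ?_⟩
  rw [Real.sqrt_sq (norm_nonneg _)]
  exact main y hy y' hy'
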